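/- Let X and Y be independent real Gaussian random variables with X ~ N(m, s²) and Y ~ N(0, s²), where s > 0, ρ > 0 and m ≥ ρ/√2. Then P(X² + Y² ≤ ρ²) ≥ (ρ²/(π s²))·exp(−(ρ² + ρ·m·√2 + m²)/(2s²)). -/

import Mathlib

open MeasureTheory ProbabilityTheory
open scoped ENNReal NNReal

lemma gauss_interval_lb (m : ℝ) (v : ℝ≥0) (hv : v ≠ 0) (l u c : ℝ) (hc : 0 ≤ c)
    (hlu : l ≤ u) (h : ∀ x ∈ Set.Icc l u, c ≤ gaussianPDFReal m v x) :
    ENNReal.ofReal (c * (u - l)) ≤ gaussianReal m v (Set.Icc l u) := by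
  rw [gaussianReal_apply _ hv]
  have h1 : ∫⁻ x in Set.Icc l u, ENNReal.ofReal c ≤
      ∫⁻ x in Set.Icc l u, gaussianPDF m v x := by
    refine setLIntegral_mono (measurable_gaussianPDFReal m v).ennreal_ofReal ?_
    intro x hx
    exact ENNReal.ofReal_le_ofReal (h x hx)
  refine le_trans ?_ h1
  rw [setLIntegral_const, Real.volume_Icc]
  rw [ENNReal.ofReal_mul hc]

set_option maxHeartbeats 1000000 in
/-- If `X ~ N(m, s²)` and `Y ~ N(0, s²)` are independent Gaussians with
`s > 0`, `ρ > 0` and `m ≥ ρ/√2`, then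
`P(X² + Y² ≤ ρ²) ≥ (ρ²/(π s²))·exp(−(ρ² + ρm√2 + m²)/(2s²))`. -/
theorem gaussian_disk_hit_lower_bound {Ω : Type*} [MeasurableSpace Ω] (μ : Measure Ω)
    [IsProbabilityMeasure μ] (X Y : Ω → ℝ) (hX : Measurable X) (hY : Measurable Y)
    (hindep : IndepFun X Y μ) (m ρ : ℝ) (s : ℝ≥0) (hs : 0 < s) (hρ : 0 < ρ)
    (hm : ρ / Real.sqrt 2 ≤ m)
    (hXlaw : μ.map X = gaussianReal m (s ^ 2))
    (hYlaw : μ.map Y = gaussianReal 0 (s ^ 2)) :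
    ENNReal.ofReal (ρ ^ 2 / (Real.pi * (s : ℝ) ^ 2) *
        Real.exp (-(ρ ^ 2 + ρ * m * Real.sqrt 2 + m ^ 2) / (2 * (s : ℝ) ^ 2))) ≤
      μ {ω | X ω ^ 2 + Y ω ^ 2 ≤ ρ ^ 2} := by
  obtain ⟨a, ha_def⟩ : ∃ a : ℝ, a = ρ / Real.sqrt 2 := ⟨_, rfl⟩
  rw [← ha_def] at hm
  have h2 : (0:ℝ) < Real.sqrt 2 := Real.sqrt_pos.mpr (by norm_num)
  have ha : 0 < a := by rw [ha_def]; exact div_pos hρ h2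
  have ha2 : a ^ 2 = ρ ^ 2 / 2 := by
    rw [ha_def, div_pow, Real.sq_sqrt (by norm_num : (0:ℝ) ≤ 2)]
  have hv : (s ^ 2 : ℝ≥0) ≠ 0 := pow_ne_zero 2 hs.ne'
  have hvR : ((s ^ 2 : ℝ≥0) : ℝ) = (s:ℝ)^2 := by push_cast; ring
  have hsR : (0:ℝ) < (s:ℝ) := hs
  have hsub : (X ⁻¹' Set.Icc (-a) a) ∩ (Y ⁻¹' Set.Icc (-a) a) ⊆
      {ω | X ω ^ 2 + Y ω ^ 2 ≤ ρ ^ 2} := by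
    rintro ω ⟨hx, hy⟩
    have h1 : X ω ^ 2 ≤ a ^ 2 := sq_le_sq' hx.1 hx.2
    have h2' : Y ω ^ 2 ≤ a ^ 2 := sq_le_sq' hy.1 hy.2
    simp only [Set.mem_setOf_eq]
    nlinarith
  have hmeas : μ ((X ⁻¹' Set.Icc (-a) a) ∩ (Y ⁻¹' Set.Icc (-a) a)) ≤
      μ {ω | X ω ^ 2 + Y ω ^ 2 ≤ ρ ^ 2} := measure_mono hsub
  refine le_trans ?_ hmeas
  rw [hindep.measure_inter_preimage_eq_mul _ _ measurableSet_Icc measurableSet_Icc]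
  have hXm : μ (X ⁻¹' Set.Icc (-a) a) = gaussianReal m (s^2) (Set.Icc (-a) a) := by
    rw [← hXlaw, Measure.map_apply hX measurableSet_Icc]
  have hYm : μ (Y ⁻¹' Set.Icc (-a) a) = gaussianReal 0 (s^2) (Set.Icc (-a) a) := by
    rw [← hYlaw, Measure.map_apply hY measurableSet_Icc]
  rw [hXm, hYm]
  obtain ⟨c₁, hc₁⟩ : ∃ c : ℝ, c = (Real.sqrt (2 * Real.pi * (s:ℝ)^2))⁻¹ *
      Real.exp (-(a + m)^2 / (2 * (s:ℝ)^2)) := ⟨_, rfl⟩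
  obtain ⟨c₂, hc₂⟩ : ∃ c : ℝ, c = (Real.sqrt (2 * Real.pi * (s:ℝ)^2))⁻¹ *
      Real.exp (-a^2 / (2 * (s:ℝ)^2)) := ⟨_, rfl⟩
  have hsqrt_pos : 0 < Real.sqrt (2 * Real.pi * (s:ℝ)^2) :=
    Real.sqrt_pos.mpr (by positivity)
  have hc₁0 : 0 ≤ c₁ := by rw [hc₁]; positivity
  have hc₂0 : 0 ≤ c₂ := by rw [hc₂]; positivity
  have hb1 : ENNReal.ofReal (c₁ * (a - (-a))) ≤ gaussianReal m (s^2) (Set.Icc (-a) a) := by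
    refine gauss_interval_lb m _ hv _ _ _ hc₁0 (by linarith) ?_
    intro x hx
    rw [hc₁]
    rw [gaussianPDFReal, hvR]
    refine mul_le_mul_of_nonneg_left ?_ (by positivity)
    refine Real.exp_le_exp.mpr ?_
    refine div_le_div_of_nonneg_right ?_ (by positivity)
    have hxm : x ≤ m := le_trans hx.2 hm
    have : (x - m)^2 ≤ (a + m)^2 := by nlinarith [hx.1, hx.2]
    linarith
  have hb2 : ENNReal.ofReal (c₂ * (a - (-a))) ≤ gaussianReal 0 (s^2) (Set.Icc (-a) a) := by
    refine gauss_interval_lb 0 _ hv _ _ _ hc₂0 (by linarith) ?_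
    intro x hx
    rw [hc₂]
    rw [gaussianPDFReal, hvR]
    refine mul_le_mul_of_nonneg_left ?_ (by positivity)
    refine Real.exp_le_exp.mpr ?_
    refine div_le_div_of_nonneg_right ?_ (by positivity)
    have : (x - 0)^2 ≤ a^2 := by nlinarith [hx.1, hx.2]
    linarith
  refine le_trans ?_ (mul_le_mul' hb1 hb2)
  rw [← ENNReal.ofReal_mul (mul_nonneg hc₁0 (by linarith))]
  refine ENNReal.ofReal_le_ofReal (le_of_eq ?_)
  have hsq : (Real.sqrt (2 * Real.pi * (s:ℝ)^2))⁻¹ *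
      (Real.sqrt (2 * Real.pi * (s:ℝ)^2))⁻¹ = (2 * Real.pi * (s:ℝ)^2)⁻¹ := by
    rw [← mul_inv, Real.mul_self_sqrt (by positivity)]
  have hss : Real.sqrt 2 * Real.sqrt 2 = 2 := Real.mul_self_sqrt (by norm_num)
  have h2am : 2 * a * m = ρ * m * Real.sqrt 2 := by
    have hdiv : a = ρ * Real.sqrt 2 / 2 := by
      rw [ha_def, div_eq_div_iff h2.ne' two_ne_zero]
      linear_combination (-ρ) * hss
    rw [hdiv]; ring
  have hkey : -(a + m)^2 / (2 * (s:ℝ)^2) + -a^2 / (2 * (s:ℝ)^2)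
      = -(ρ ^ 2 + ρ * m * Real.sqrt 2 + m ^ 2) / (2 * (s : ℝ) ^ 2) := by
    rw [← add_div]
    congr 1
    nlinarith [ha2, h2am]
  have hexp : Real.exp (-(a + m)^2 / (2 * (s:ℝ)^2)) * Real.exp (-a^2 / (2 * (s:ℝ)^2))
      = Real.exp (-(ρ ^ 2 + ρ * m * Real.sqrt 2 + m ^ 2) / (2 * (s : ℝ) ^ 2)) := by
    rw [← Real.exp_add, hkey]
  have hcoef : (2 * Real.pi * (s:ℝ)^2)⁻¹ * (2 * a * (2 * a))
      = ρ ^ 2 / (Real.pi * (s:ℝ)^2) := by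
    have h4a : 2 * a * (2 * a) = 2 * ρ^2 := by nlinarith [ha2]
    rw [h4a, inv_mul_eq_div, div_eq_div_iff (by positivity) (by positivity)]
    ring
  rw [hc₁, hc₂, ← hexp, ← hcoef, ← hsq]
  ring
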